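/- arXiv:1812.11155 — 4 statements merged into one kernel-verified Lean document; each statement's English description precedes it below -/
import Mathlib

section
/- For a positively oriented nondegenerate triangle, cot(β)·(v₁−v₃) − cot(γ)·(v₂−v₁) = J(v₃−v₂), where β and γ are the interior angles of the triangle at the vertices v₂ and v₃ respectively and cot θ := cos θ / sin θ. -/
noncomputable section

/-- Determinant of two vectors in ℝ². -/
def det2 (a b : EuclideanSpace ℝ (Fin 2)) : ℝ := a 0 * b 1 - a 1 * b 0

/-- The 90° counter-clockwise rotation `J(x,y) = (−y,x)`. -/
def Jrot (a : EuclideanSpace ℝ (Fin 2)) : EuclideanSpace ℝ (Fin 2) := WithLp.toLp 2 ![-(a 1), a 0]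

lemma inner_eq' (x y : EuclideanSpace ℝ (Fin 2)) :
    (inner ℝ x y : ℝ) = x 0 * y 0 + x 1 * y 1 := by
  simp [PiLp.inner_apply, Fin.sum_univ_two, mul_comm]

lemma cot_angle' (x y : EuclideanSpace ℝ (Fin 2)) (h : det2 x y ≠ 0) :
    Real.cos (InnerProductGeometry.angle x y) / Real.sin (InnerProductGeometry.angle x y)
      = (inner ℝ x y : ℝ) / |det2 x y| := by
  have hx : x ≠ 0 := by rintro rfl; simp [det2] at h
  have hy : y ≠ 0 := by rintro rfl; simp [det2] at h
  have hxn : (0:ℝ) < ‖x‖ := norm_pos_iff.2 hx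
  have hyn : (0:ℝ) < ‖y‖ := norm_pos_iff.2 hy
  have hN : ‖x‖ * ‖y‖ ≠ 0 := by positivity
  have hgram : (inner ℝ x x : ℝ) * (inner ℝ y y : ℝ) - (inner ℝ x y :ℝ) * (inner ℝ x y : ℝ)
      = det2 x y ^ 2 := by
    simp only [inner_eq', det2]; ring
  have hsin := InnerProductGeometry.sin_angle_mul_norm_mul_norm x y
  rw [hgram, Real.sqrt_sq_eq_abs] at hsin
  have hsin' : Real.sin (InnerProductGeometry.angle x y) = |det2 x y| / (‖x‖ * ‖y‖) := by
    field_simp [hsin]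
    rw [← hsin]; ring
  rw [InnerProductGeometry.cos_angle, hsin']
  field_simp

/-- For a positively oriented nondegenerate triangle,
`cot(β)·(v₁−v₃) − cot(γ)·(v₂−v₁) = J(v₃−v₂)`, where `β`, `γ` are the interior
angles at `v₂`, `v₃`. -/
theorem cotangent_edge_identity
    (v₁ v₂ v₃ : EuclideanSpace ℝ (Fin 2))
    (hA : 0 < det2 (v₂ - v₁) (v₃ - v₁))
    (β γ : ℝ)
    (hβ : β = EuclideanGeometry.angle v₁ v₂ v₃)
    (hγ : γ = EuclideanGeometry.angle v₂ v₃ v₁) :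
    (Real.cos β / Real.sin β) • (v₁ - v₃) - (Real.cos γ / Real.sin γ) • (v₂ - v₁)
      = Jrot (v₃ - v₂) := by
  set D : ℝ := det2 (v₂ - v₁) (v₃ - v₁) with hD
  have hd1 : det2 (v₁ - v₂) (v₃ - v₂) = -D := by
    simp only [det2, hD, PiLp.sub_apply]; ring
  have hd2 : det2 (v₂ - v₃) (v₁ - v₃) = -D := by
    simp only [det2, hD, PiLp.sub_apply]; ring
  have hβc : Real.cos β / Real.sin β = (inner ℝ (v₁ - v₂) (v₃ - v₂) : ℝ) / D := by
    rw [hβ, EuclideanGeometry.angle, vsub_eq_sub, vsub_eq_sub,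
      cot_angle' _ _ (by rw [hd1]; exact neg_ne_zero.2 (ne_of_gt hA)), hd1, abs_neg,
      abs_of_pos hA]
  have hγc : Real.cos γ / Real.sin γ = (inner ℝ (v₂ - v₃) (v₁ - v₃) : ℝ) / D := by
    rw [hγ, EuclideanGeometry.angle, vsub_eq_sub, vsub_eq_sub,
      cot_angle' _ _ (by rw [hd2]; exact neg_ne_zero.2 (ne_of_gt hA)), hd2, abs_neg,
      abs_of_pos hA]
  have hDne : D ≠ 0 := ne_of_gt hA
  rw [hβc, hγc]
  ext i
  fin_cases i <;>
    simp only [PiLp.sub_apply, PiLp.smul_apply, smul_eq_mul, Jrot, inner_eq',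
      Fin.zero_eta, Fin.mk_one, PiLp.toLp_apply,
      Matrix.cons_val_zero, Matrix.cons_val_one, Matrix.head_cons] <;>
    field_simp [hDne] <;>
    · rw [hD]; simp only [det2, PiLp.sub_apply]; ring
end
end

section
/- For a positively oriented nondegenerate triangle with circumcenter c, the DEC Hodge ratio of the edge [v₁,v₂] equals half the cotangent of the opposite angle: t₁ := 2·det(v₂−v₁, c−v₁)/‖v₂−v₁‖² = cot(γ) = cos(γ)/sin(γ), where γ is the interior angle at v₃ (equivalently, the signed quotient l₁/L₁ appearing in the DEC Hodge star equals tan(α₁)/2 with α₁ = π/2 − γ). -/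
noncomputable section

open scoped RealInnerProductSpace

private lemma aux_sq_pos (a b c d : ℝ) (h : 0 < a * d - b * c) : 0 < a ^ 2 + b ^ 2 := by
  nlinarith [mul_pos h h, sq_nonneg (a * c + b * d), sq_nonneg c, sq_nonneg d]

/-- For a positively oriented nondegenerate triangle with circumcenter `c`, the DEC
Hodge ratio of the edge `[v₁,v₂]`, namely `t₁ = 2·det(v₂−v₁, c−v₁)/‖v₂−v₁‖²`,
equals `cot(γ) = cos(γ)/sin(γ)` where `γ` is the interior angle at `v₃`
(equivalently, it equals `2·(tan(α₁)/2)` with `α₁ = π/2 − γ`). -/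
theorem dec_hodge_ratio_eq_cot_opposite_angle
    (v₁ v₂ v₃ : EuclideanSpace ℝ (Fin 2))
    (hA : 0 < det2 (v₂ - v₁) (v₃ - v₁))
    (c : EuclideanSpace ℝ (Fin 2))
    (hc₁ : ‖c - v₁‖ = ‖c - v₂‖) (hc₂ : ‖c - v₂‖ = ‖c - v₃‖)
    (γ : ℝ) (hγ : γ = EuclideanGeometry.angle v₂ v₃ v₁)
    (t₁ : ℝ) (ht₁ : t₁ = 2 * det2 (v₂ - v₁) (c - v₁) / ‖v₂ - v₁‖ ^ 2) :
    t₁ = Real.cos γ / Real.sin γ ∧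
      t₁ / 2 = Real.tan (Real.pi / 2 - γ) / 2 := by
  have hsub : ∀ (a b : EuclideanSpace ℝ (Fin 2)) (i : Fin 2), (a - b) i = a i - b i :=
    fun _ _ _ => rfl
  have hnorm : ∀ u : EuclideanSpace ℝ (Fin 2), ‖u‖ ^ 2 = u 0 ^ 2 + u 1 ^ 2 := by
    intro u
    rw [← real_inner_self_eq_norm_sq]
    simp only [PiLp.inner_apply, Fin.sum_univ_two, RCLike.inner_apply, conj_trivial]
    ring
  have hinner : ∀ u w : EuclideanSpace ℝ (Fin 2), ⟪u, w⟫ = u 0 * w 0 + u 1 * w 1 := by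
    intro u w
    simp [PiLp.inner_apply, Fin.sum_univ_two]
    ring
  have hA' : 0 < (v₂ 0 - v₁ 0) * (v₃ 1 - v₁ 1) - (v₂ 1 - v₁ 1) * (v₃ 0 - v₁ 0) := by
    simpa [det2, hsub] using hA
  have hD : det2 (v₂ - v₁) (v₃ - v₁) ≠ 0 := ne_of_gt hA
  -- positivity of squared lengths
  have hEpos : 0 < ‖v₂ - v₁‖ ^ 2 := by
    rw [hnorm]; simp only [hsub]
    exact aux_sq_pos _ _ _ _ hA'
  have hx2 : 0 < ‖v₂ - v₃‖ ^ 2 := by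
    rw [hnorm]; simp only [hsub]
    refine aux_sq_pos _ _ (-(v₁ 0 - v₃ 0)) (-(v₁ 1 - v₃ 1)) ?_
    linarith [hA']
  have hy2 : 0 < ‖v₁ - v₃‖ ^ 2 := by
    rw [hnorm]; simp only [hsub]
    refine aux_sq_pos _ _ (v₂ 0 - v₃ 0) (v₂ 1 - v₃ 1) ?_
    linarith [hA']
  have hx : 0 < ‖v₂ - v₃‖ := by nlinarith [norm_nonneg (v₂ - v₃), hx2]
  have hy : 0 < ‖v₁ - v₃‖ := by nlinarith [norm_nonneg (v₁ - v₃), hy2]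
  have hxy : ‖v₂ - v₃‖ * ‖v₁ - v₃‖ ≠ 0 := ne_of_gt (mul_pos hx hy)
  -- trigonometric identities
  have hcos : Real.cos γ = ⟪v₂ - v₃, v₁ - v₃⟫ / (‖v₂ - v₃‖ * ‖v₁ - v₃‖) := by
    rw [hγ]; exact InnerProductGeometry.cos_angle _ _
  have hsin : Real.sin γ * (‖v₂ - v₃‖ * ‖v₁ - v₃‖) = det2 (v₂ - v₁) (v₃ - v₁) := by
    have hang : EuclideanGeometry.angle v₂ v₃ v₁
        = InnerProductGeometry.angle (v₂ - v₃) (v₁ - v₃) := rfl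
    rw [hγ, hang]
    have h := InnerProductGeometry.sin_angle_mul_norm_mul_norm (v₂ - v₃) (v₁ - v₃)
    rw [show (⟪v₂ - v₃, v₂ - v₃⟫ * ⟪v₁ - v₃, v₁ - v₃⟫
        - ⟪v₂ - v₃, v₁ - v₃⟫ * ⟪v₂ - v₃, v₁ - v₃⟫)
        = (det2 (v₂ - v₁) (v₃ - v₁)) ^ 2 by
      simp only [hinner, det2, hsub]; ring] at h
    rw [h, Real.sqrt_sq hA.le]
  have hsin' : Real.sin γ = det2 (v₂ - v₁) (v₃ - v₁) / (‖v₂ - v₃‖ * ‖v₁ - v₃‖) :=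
    eq_div_of_mul_eq hxy hsin
  -- circumcenter equations in coordinates
  have E1 : ‖c - v₁‖ ^ 2 = ‖c - v₂‖ ^ 2 := by rw [hc₁]
  have E2 : ‖c - v₂‖ ^ 2 = ‖c - v₃‖ ^ 2 := by rw [hc₂]
  simp only [hnorm, hsub] at E1 E2
  -- key algebraic identity
  have key : 2 * det2 (v₂ - v₁) (c - v₁) * det2 (v₂ - v₁) (v₃ - v₁)
      = ⟪v₂ - v₃, v₁ - v₃⟫ * ‖v₂ - v₁‖ ^ 2 := by
    simp only [det2, hinner, hnorm, hsub]
    linear_combination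
      ((v₂ 0 - v₁ 0) ^ 2 + (v₂ 1 - v₁ 1) ^ 2
        - ((v₂ 0 - v₁ 0) * (v₃ 0 - v₁ 0) + (v₂ 1 - v₁ 1) * (v₃ 1 - v₁ 1))) * E1
      + ((v₂ 0 - v₁ 0) ^ 2 + (v₂ 1 - v₁ 1) ^ 2) * E2
  have ht : t₁ = ⟪v₂ - v₃, v₁ - v₃⟫ / det2 (v₂ - v₁) (v₃ - v₁) := by
    rw [ht₁, div_eq_div_iff (ne_of_gt hEpos) hD]
    linear_combination key
  have hmain : t₁ = Real.cos γ / Real.sin γ := by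
    rw [ht, hcos, hsin']
    field_simp
  refine ⟨hmain, ?_⟩
  rw [hmain, Real.tan_pi_div_two_sub, Real.tan_eq_sin_div_cos, inv_div]
end
end

section
/- For a positively oriented nondegenerate triangle with circumcenter c and circumradius R, the signed distance from the midpoint of the edge [v₁,v₂] to the circumcenter satisfies det(v₂−v₁, c−v₁)/‖v₂−v₁‖ = R·cos(γ), where γ is the interior angle at v₃ (the DEC relation l₁ = R sin(α₁) with α₁ = π/2 − γ). -/
noncomputable section

lemma pos_of_sq {a s : ℝ} (h0 : 0 ≤ a) (h : a ^ 2 = s) (hs : 0 < s) : 0 < a := by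
  rcases h0.lt_or_eq with h' | h'
  · exact h'
  · exfalso; rw [← h, ← h'] at hs; simp at hs
lemma pos_left_of_mul {x y : ℝ} (hx : 0 ≤ x) (hxy : 0 < x * y) : 0 < x := by
  rcases hx.lt_or_eq with h' | h'
  · exact h'
  · exfalso; rw [← h'] at hxy; simp at hxy
lemma eq_of_sq_eq {x y : ℝ} (hx : 0 ≤ x) (hy : 0 ≤ y) (h : x ^ 2 = y ^ 2) : x = y := by
  calc x = Real.sqrt (x ^ 2) := (Real.sqrt_sq hx).symm
  _ = Real.sqrt (y ^ 2) := by rw [h]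
  _ = y := Real.sqrt_sq hy

set_option maxHeartbeats 1000000 in
/-- For a positively oriented nondegenerate triangle with circumcenter `c` and
circumradius `R`, the signed distance from the midpoint of the edge `[v₁,v₂]` to
the circumcenter satisfies `det(v₂−v₁, c−v₁)/‖v₂−v₁‖ = R·cos(γ)`, where `γ` is
the interior angle at `v₃`. -/
theorem dec_dual_edge_length_eq_R_cos
    (v₁ v₂ v₃ : EuclideanSpace ℝ (Fin 2))
    (hA : 0 < det2 (v₂ - v₁) (v₃ - v₁))
    (c : EuclideanSpace ℝ (Fin 2))
    (hc₁ : ‖c - v₁‖ = ‖c - v₂‖) (hc₂ : ‖c - v₂‖ = ‖c - v₃‖)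
    (R : ℝ) (hR : R = ‖c - v₁‖)
    (γ : ℝ) (hγ : γ = EuclideanGeometry.angle v₂ v₃ v₁) :
    det2 (v₂ - v₁) (c - v₁) / ‖v₂ - v₁‖ = R * Real.cos γ := by
  have hang : EuclideanGeometry.angle v₂ v₃ v₁ = InnerProductGeometry.angle (v₂ - v₃) (v₁ - v₃) := rfl
  rw [hγ, hang, InnerProductGeometry.cos_angle, hR]
  have hsub : ∀ (x y : EuclideanSpace ℝ (Fin 2)) (i : Fin 2), (x - y) i = x i - y i :=
    fun _ _ _ => rfl
  have hnsq : ∀ x : EuclideanSpace ℝ (Fin 2), ‖x‖ ^ 2 = x 0 ^ 2 + x 1 ^ 2 := by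
    intro x
    rw [EuclideanSpace.norm_eq, Real.sq_sqrt (by positivity)]
    simp [Fin.sum_univ_two, sq_abs]
  set d0 := v₂ 0 - v₁ 0 with hd0
  set d1 := v₂ 1 - v₁ 1 with hd1
  set e0 := v₃ 0 - v₁ 0 with he0
  set e1 := v₃ 1 - v₁ 1 with he1
  set p0 := c 0 - v₁ 0 with hp0
  set p1 := c 1 - v₁ 1 with hp1
  set S := (d0 - e0) * (-e0) + (d1 - e1) * (-e1) with hS
  have hD : 0 < d0 * e1 - d1 * e0 := by simpa [det2, hsub] using hA
  set D := d0 * e1 - d1 * e0 with hDdef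
  have hD2 : 0 < D ^ 2 := pow_pos hD 2
  have hdet : det2 (v₂ - v₁) (c - v₁) = d0 * p1 - d1 * p0 := by simp [det2, hsub]; rfl
  have hinner : (inner ℝ (v₂ - v₃) (v₁ - v₃) : ℝ) = S := by
    simp [PiLp.inner_apply, hsub, hS, Fin.sum_univ_two]; ring
  set a := ‖v₂ - v₁‖ with haD
  set b := ‖v₁ - v₃‖ with hbD
  set f := ‖v₂ - v₃‖ with hfD
  set r := ‖c - v₁‖ with hrD
  have ha2 : a ^ 2 = d0 ^ 2 + d1 ^ 2 := by rw [haD, hnsq]; simp [hsub]; rfl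
  have hb2 : b ^ 2 = e0 ^ 2 + e1 ^ 2 := by rw [hbD, hnsq]; simp [hsub]; ring
  have hf2 : f ^ 2 = (d0 - e0) ^ 2 + (d1 - e1) ^ 2 := by rw [hfD, hnsq]; simp [hsub]; ring
  have hr2 : r ^ 2 = p0 ^ 2 + p1 ^ 2 := by rw [hrD, hnsq]; simp [hsub]; rfl
  -- circumcenter equations
  have hcv2 : ‖c - v₂‖ ^ 2 = (p0 - d0) ^ 2 + (p1 - d1) ^ 2 := by
    rw [hnsq]; simp [hsub]; ring
  have hcv3 : ‖c - v₃‖ ^ 2 = (p0 - e0) ^ 2 + (p1 - e1) ^ 2 := by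
    rw [hnsq]; simp [hsub]; ring
  have h1 : 2 * (p0 * d0 + p1 * d1) = d0 ^ 2 + d1 ^ 2 := by
    have := congrArg (· ^ 2) hc₁
    rw [hcv2, hr2] at this
    linear_combination this
  have h2 : 2 * (p0 * e0 + p1 * e1) = e0 ^ 2 + e1 ^ 2 := by
    have := congrArg (· ^ 2) (hc₁.trans hc₂)
    rw [hcv3, hr2] at this
    linear_combination this
  -- positivity of side lengths
  have ha : 0 < a := pos_of_sq (norm_nonneg _) ha2 <| by
    refine pos_left_of_mul (by positivity) (x := d0 ^ 2 + d1 ^ 2) (y := e0 ^ 2 + e1 ^ 2) ?_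
    have : (d0 ^ 2 + d1 ^ 2) * (e0 ^ 2 + e1 ^ 2) = D ^ 2 + (d0 * e0 + d1 * e1) ^ 2 := by
      rw [hDdef]; ring
    rw [this]; positivity
  have hb : 0 < b := pos_of_sq (norm_nonneg _) hb2 <| by
    refine pos_left_of_mul (by positivity) (x := e0 ^ 2 + e1 ^ 2) (y := d0 ^ 2 + d1 ^ 2) ?_
    have : (e0 ^ 2 + e1 ^ 2) * (d0 ^ 2 + d1 ^ 2) = D ^ 2 + (d0 * e0 + d1 * e1) ^ 2 := by
      rw [hDdef]; ring
    rw [this]; positivity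
  have hf : 0 < f := pos_of_sq (norm_nonneg _) hf2 <| by
    refine pos_left_of_mul (by positivity)
      (x := (d0 - e0) ^ 2 + (d1 - e1) ^ 2) (y := e0 ^ 2 + e1 ^ 2) ?_
    have : ((d0 - e0) ^ 2 + (d1 - e1) ^ 2) * (e0 ^ 2 + e1 ^ 2)
        = D ^ 2 + ((d0 - e0) * e0 + (d1 - e1) * e1) ^ 2 := by
      rw [hDdef]; ring
    rw [this]; positivity
  -- key algebraic identities
  have h3 : 2 * D * p0 = e1 * (d0 ^ 2 + d1 ^ 2) - d1 * (e0 ^ 2 + e1 ^ 2) := by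
    rw [hDdef]; linear_combination e1 * h1 - d1 * h2
  have h4 : 2 * D * p1 = d0 * (e0 ^ 2 + e1 ^ 2) - e0 * (d0 ^ 2 + d1 ^ 2) := by
    rw [hDdef]; linear_combination d0 * h2 - e0 * h1
  have claim1 : 2 * D * (d0 * p1 - d1 * p0) = a ^ 2 * S := by
    rw [hDdef, ha2, hS]
    linear_combination (d0 ^ 2 + d1 ^ 2) * h2 - (d0 * e0 + d1 * e1) * h1
  have claim2 : 2 * D * r = a * b * f := by
    refine eq_of_sq_eq (by positivity) (by positivity) ?_
    have expand : 4 * D ^ 2 * (p0 ^ 2 + p1 ^ 2)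
        = (d0 ^ 2 + d1 ^ 2) * (e0 ^ 2 + e1 ^ 2) * ((d0 - e0) ^ 2 + (d1 - e1) ^ 2) := by
      linear_combination (2 * D * p0 + (e1 * (d0 ^ 2 + d1 ^ 2) - d1 * (e0 ^ 2 + e1 ^ 2))) * h3
        + (2 * D * p1 + (d0 * (e0 ^ 2 + e1 ^ 2) - e0 * (d0 ^ 2 + d1 ^ 2))) * h4
    calc (2 * D * r) ^ 2 = 4 * D ^ 2 * (p0 ^ 2 + p1 ^ 2) := by rw [← hr2]; ring
    _ = (d0 ^ 2 + d1 ^ 2) * (e0 ^ 2 + e1 ^ 2) * ((d0 - e0) ^ 2 + (d1 - e1) ^ 2) := expand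
    _ = (a * b * f) ^ 2 := by rw [mul_pow, mul_pow, ha2, hb2, hf2]
  -- finish
  rw [hdet, hinner]
  have h2D : (2 * D) ≠ 0 := ne_of_gt (by linarith)
  have key : (d0 * p1 - d1 * p0) * (f * b) = a * (r * S) :=
    mul_left_cancel₀ h2D (by linear_combination (f * b) * claim1 - (a * S) * claim2)
  rw [mul_div_assoc']
  rw [div_eq_div_iff (ne_of_gt ha) (by positivity : f * b ≠ 0)]
  linear_combination key
end
end

section
/- For a positively oriented nondegenerate triangle with circumcenter c and circumradius R, the signed dual (circumcentric) area assigned to the vertex v₁, namely A₁ := (1/4)·[det(v₂−v₁, c−v₁) + det(v₁−v₃, c−v₃)], equals (R²/4)·(sin(2β) + sin(2γ)), where β and γ are the interior angles at v₂ and v₃. -/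
noncomputable section

private lemma frac_aux (A B C T S : ℝ) (hT : T ≠ 0) (hA : A ≠ 0) (hC : C ≠ 0) :
    A * B * C / (4 * T ^ 2) / 4 * (2 * T * S / (A * C)) = B * S / (8 * T) := by
  field_simp; ring

private lemma frac_aux2 (A B C T S : ℝ) (hT : T ≠ 0) (hB : B ≠ 0) (hC : C ≠ 0) :
    A * B * C / (4 * T ^ 2) / 4 * (2 * T * S / (C * B)) = A * S / (8 * T) := by
  field_simp; ring

set_option maxHeartbeats 1000000 in
/-- For a positively oriented nondegenerate triangle with circumcenter `c` and
circumradius `R`, the signed dual (circumcentric) area assigned to the vertex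
`v₁`, namely `A₁ = (1/4)·[det(v₂−v₁, c−v₁) + det(v₁−v₃, c−v₃)]`, equals
`(R²/4)·(sin(2β) + sin(2γ))`, where `β, γ` are the interior angles at `v₂, v₃`. -/
theorem dec_dual_area_eq_trig_formula
    (v₁ v₂ v₃ : EuclideanSpace ℝ (Fin 2))
    (hA : 0 < det2 (v₂ - v₁) (v₃ - v₁))
    (c : EuclideanSpace ℝ (Fin 2))
    (hc₁ : ‖c - v₁‖ = ‖c - v₂‖) (hc₂ : ‖c - v₂‖ = ‖c - v₃‖)
    (R : ℝ) (hR : R = ‖c - v₁‖)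
    (β γ : ℝ)
    (hβ : β = EuclideanGeometry.angle v₁ v₂ v₃)
    (hγ : γ = EuclideanGeometry.angle v₂ v₃ v₁) :
    (1 / 4) * (det2 (v₂ - v₁) (c - v₁) + det2 (v₁ - v₃) (c - v₃))
      = (R ^ 2 / 4) * (Real.sin (2 * β) + Real.sin (2 * γ)) := by
  have inner2 : ∀ x y : EuclideanSpace ℝ (Fin 2),
      (inner ℝ x y : ℝ) = x 0 * y 0 + x 1 * y 1 := fun x y => by
    simp [PiLp.inner_apply, Fin.sum_univ_two, RCLike.inner_apply]; ring
  have nsq : ∀ x : EuclideanSpace ℝ (Fin 2), ‖x‖ ^ 2 = x 0 ^ 2 + x 1 ^ 2 := fun x => by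
    rw [← real_inner_self_eq_norm_sq, inner2]; ring
  have hT : (0:ℝ) < ((v₂ 0 - v₁ 0) * (v₃ 1 - v₁ 1) - (v₂ 1 - v₁ 1) * (v₃ 0 - v₁ 0)) := by
    simpa [det2, PiLp.sub_apply] using hA
  have hn12 : (0:ℝ) < ((v₁ 0 - v₂ 0) ^ 2 + (v₁ 1 - v₂ 1) ^ 2) := by
    nlinarith [sq_nonneg ((v₂ 0 - v₁ 0) * (v₃ 0 - v₁ 0) + (v₂ 1 - v₁ 1) * (v₃ 1 - v₁ 1)),
      sq_nonneg (v₃ 0 - v₁ 0), sq_nonneg (v₃ 1 - v₁ 1), mul_pos hT hT]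
  have hn13 : (0:ℝ) < ((v₁ 0 - v₃ 0) ^ 2 + (v₁ 1 - v₃ 1) ^ 2) := by
    nlinarith [sq_nonneg ((v₂ 0 - v₁ 0) * (v₃ 0 - v₁ 0) + (v₂ 1 - v₁ 1) * (v₃ 1 - v₁ 1)),
      sq_nonneg (v₂ 0 - v₁ 0), sq_nonneg (v₂ 1 - v₁ 1), mul_pos hT hT]
  have hn32 : (0:ℝ) < ((v₃ 0 - v₂ 0) ^ 2 + (v₃ 1 - v₂ 1) ^ 2) := by
    nlinarith [sq_nonneg ((v₁ 0 - v₂ 0) * (v₃ 0 - v₂ 0) + (v₁ 1 - v₂ 1) * (v₃ 1 - v₂ 1)),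
      sq_nonneg (v₁ 0 - v₂ 0), sq_nonneg (v₁ 1 - v₂ 1), mul_pos hT hT]
  have hn23 : (0:ℝ) < ((v₂ 0 - v₃ 0) ^ 2 + (v₂ 1 - v₃ 1) ^ 2) := by nlinarith [hn32]
  have hnu : (0:ℝ) < ((v₂ 0 - v₁ 0) ^ 2 + (v₂ 1 - v₁ 1) ^ 2) := by nlinarith [hn12]
  have hnw : (0:ℝ) < ((v₃ 0 - v₁ 0) ^ 2 + (v₃ 1 - v₁ 1) ^ 2) := by nlinarith [hn13]
  -- angle β
  have hβv : β = InnerProductGeometry.angle (v₁ - v₂) (v₃ - v₂) := hβ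
  have hcosβ : Real.cos β * (‖v₁ - v₂‖ * ‖v₃ - v₂‖) = ((v₁ 0 - v₂ 0) * (v₃ 0 - v₂ 0) + (v₁ 1 - v₂ 1) * (v₃ 1 - v₂ 1)) := by
    rw [hβv, InnerProductGeometry.cos_angle_mul_norm_mul_norm, inner2]
    simp [PiLp.sub_apply]
  have hsinβ : Real.sin β * (‖v₁ - v₂‖ * ‖v₃ - v₂‖) = ((v₂ 0 - v₁ 0) * (v₃ 1 - v₁ 1) - (v₂ 1 - v₁ 1) * (v₃ 0 - v₁ 0)) := by
    rw [hβv, InnerProductGeometry.sin_angle_mul_norm_mul_norm,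
      show (inner ℝ (v₁ - v₂) (v₁ - v₂) : ℝ) * (inner ℝ (v₃ - v₂) (v₃ - v₂) : ℝ)
          - (inner ℝ (v₁ - v₂) (v₃ - v₂) : ℝ) * (inner ℝ (v₁ - v₂) (v₃ - v₂) : ℝ) = ((v₂ 0 - v₁ 0) * (v₃ 1 - v₁ 1) - (v₂ 1 - v₁ 1) * (v₃ 0 - v₁ 0)) ^ 2 by
        rw [inner2, inner2, inner2]; simp only [PiLp.sub_apply]; ring]
    exact Real.sqrt_sq hT.le
  have hNβ : ‖v₁ - v₂‖ ^ 2 * ‖v₃ - v₂‖ ^ 2 = ((v₁ 0 - v₂ 0) ^ 2 + (v₁ 1 - v₂ 1) ^ 2) * ((v₃ 0 - v₂ 0) ^ 2 + (v₃ 1 - v₂ 1) ^ 2) := by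
    rw [nsq, nsq]; simp [PiLp.sub_apply]
  have hs2β : Real.sin (2 * β) = 2 * ((v₂ 0 - v₁ 0) * (v₃ 1 - v₁ 1) - (v₂ 1 - v₁ 1) * (v₃ 0 - v₁ 0)) * ((v₁ 0 - v₂ 0) * (v₃ 0 - v₂ 0) + (v₁ 1 - v₂ 1) * (v₃ 1 - v₂ 1)) / (((v₁ 0 - v₂ 0) ^ 2 + (v₁ 1 - v₂ 1) ^ 2) * ((v₃ 0 - v₂ 0) ^ 2 + (v₃ 1 - v₂ 1) ^ 2)) := by
    rw [eq_div_iff (by positivity), Real.sin_two_mul, ← hNβ]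
    linear_combination (2 * Real.cos β * (‖v₁ - v₂‖ * ‖v₃ - v₂‖)) * hsinβ
      + (2 * ((v₂ 0 - v₁ 0) * (v₃ 1 - v₁ 1) - (v₂ 1 - v₁ 1) * (v₃ 0 - v₁ 0))) * hcosβ
  -- angle γ
  have hγv : γ = InnerProductGeometry.angle (v₂ - v₃) (v₁ - v₃) := hγ
  have hcosγ : Real.cos γ * (‖v₂ - v₃‖ * ‖v₁ - v₃‖) = ((v₂ 0 - v₃ 0) * (v₁ 0 - v₃ 0) + (v₂ 1 - v₃ 1) * (v₁ 1 - v₃ 1)) := by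
    rw [hγv, InnerProductGeometry.cos_angle_mul_norm_mul_norm, inner2]
    simp [PiLp.sub_apply]
  have hsinγ : Real.sin γ * (‖v₂ - v₃‖ * ‖v₁ - v₃‖) = ((v₂ 0 - v₁ 0) * (v₃ 1 - v₁ 1) - (v₂ 1 - v₁ 1) * (v₃ 0 - v₁ 0)) := by
    rw [hγv, InnerProductGeometry.sin_angle_mul_norm_mul_norm,
      show (inner ℝ (v₂ - v₃) (v₂ - v₃) : ℝ) * (inner ℝ (v₁ - v₃) (v₁ - v₃) : ℝ)
          - (inner ℝ (v₂ - v₃) (v₁ - v₃) : ℝ) * (inner ℝ (v₂ - v₃) (v₁ - v₃) : ℝ) = ((v₂ 0 - v₁ 0) * (v₃ 1 - v₁ 1) - (v₂ 1 - v₁ 1) * (v₃ 0 - v₁ 0)) ^ 2 by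
        rw [inner2, inner2, inner2]; simp only [PiLp.sub_apply]; ring]
    exact Real.sqrt_sq hT.le
  have hNγ : ‖v₂ - v₃‖ ^ 2 * ‖v₁ - v₃‖ ^ 2 = ((v₂ 0 - v₃ 0) ^ 2 + (v₂ 1 - v₃ 1) ^ 2) * ((v₁ 0 - v₃ 0) ^ 2 + (v₁ 1 - v₃ 1) ^ 2) := by
    rw [nsq, nsq]; simp [PiLp.sub_apply]
  have hs2γ : Real.sin (2 * γ) = 2 * ((v₂ 0 - v₁ 0) * (v₃ 1 - v₁ 1) - (v₂ 1 - v₁ 1) * (v₃ 0 - v₁ 0)) * ((v₂ 0 - v₃ 0) * (v₁ 0 - v₃ 0) + (v₂ 1 - v₃ 1) * (v₁ 1 - v₃ 1)) / (((v₂ 0 - v₃ 0) ^ 2 + (v₂ 1 - v₃ 1) ^ 2) * ((v₁ 0 - v₃ 0) ^ 2 + (v₁ 1 - v₃ 1) ^ 2)) := by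
    rw [eq_div_iff (by positivity), Real.sin_two_mul, ← hNγ]
    linear_combination (2 * Real.cos γ * (‖v₂ - v₃‖ * ‖v₁ - v₃‖)) * hsinγ
      + (2 * ((v₂ 0 - v₁ 0) * (v₃ 1 - v₁ 1) - (v₂ 1 - v₁ 1) * (v₃ 0 - v₁ 0))) * hcosγ
  -- circumcenter equations in coordinates
  have hc₁' : (c 0 - v₁ 0) ^ 2 + (c 1 - v₁ 1) ^ 2 = (c 0 - v₂ 0) ^ 2 + (c 1 - v₂ 1) ^ 2 := by
    have := congrArg (· ^ 2) hc₁
    simp only [nsq, PiLp.sub_apply] at this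
    simpa using this
  have hc₃' : (c 0 - v₁ 0) ^ 2 + (c 1 - v₁ 1) ^ 2 = (c 0 - v₃ 0) ^ 2 + (c 1 - v₃ 1) ^ 2 := by
    have := congrArg (· ^ 2) (hc₁.trans hc₂)
    simp only [nsq, PiLp.sub_apply] at this
    simpa using this
  have hd0 : (c 0 - v₁ 0) * ((v₂ 0 - v₁ 0) * (v₃ 1 - v₁ 1) - (v₂ 1 - v₁ 1) * (v₃ 0 - v₁ 0)) = (((v₂ 0 - v₁ 0) ^ 2 + (v₂ 1 - v₁ 1) ^ 2) * (v₃ 1 - v₁ 1) - ((v₃ 0 - v₁ 0) ^ 2 + (v₃ 1 - v₁ 1) ^ 2) * (v₂ 1 - v₁ 1)) / 2 := by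
    linear_combination ((v₃ 1 - v₁ 1) / 2) * hc₁' - ((v₂ 1 - v₁ 1) / 2) * hc₃'
  have hd1 : (c 1 - v₁ 1) * ((v₂ 0 - v₁ 0) * (v₃ 1 - v₁ 1) - (v₂ 1 - v₁ 1) * (v₃ 0 - v₁ 0)) = (((v₃ 0 - v₁ 0) ^ 2 + (v₃ 1 - v₁ 1) ^ 2) * (v₂ 0 - v₁ 0) - ((v₂ 0 - v₁ 0) ^ 2 + (v₂ 1 - v₁ 1) ^ 2) * (v₃ 0 - v₁ 0)) / 2 := by
    linear_combination ((v₂ 0 - v₁ 0) / 2) * hc₃' - ((v₃ 0 - v₁ 0) / 2) * hc₁'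
  have hR2 : R ^ 2 = (c 0 - v₁ 0) ^ 2 + (c 1 - v₁ 1) ^ 2 := by
    rw [hR, nsq]; simp [PiLp.sub_apply]
  have hR2div : R ^ 2 = ((v₂ 0 - v₁ 0) ^ 2 + (v₂ 1 - v₁ 1) ^ 2) * ((v₃ 0 - v₁ 0) ^ 2 + (v₃ 1 - v₁ 1) ^ 2) * ((v₃ 0 - v₂ 0) ^ 2 + (v₃ 1 - v₂ 1) ^ 2) / (4 * ((v₂ 0 - v₁ 0) * (v₃ 1 - v₁ 1) - (v₂ 1 - v₁ 1) * (v₃ 0 - v₁ 0)) ^ 2) := by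
    rw [eq_div_iff (by positivity)]
    linear_combination (4 * ((v₂ 0 - v₁ 0) * (v₃ 1 - v₁ 1) - (v₂ 1 - v₁ 1) * (v₃ 0 - v₁ 0)) ^ 2) * hR2
      + (4 * (c 0 - v₁ 0) * ((v₂ 0 - v₁ 0) * (v₃ 1 - v₁ 1) - (v₂ 1 - v₁ 1) * (v₃ 0 - v₁ 0)) + 2 * (((v₂ 0 - v₁ 0) ^ 2 + (v₂ 1 - v₁ 1) ^ 2) * (v₃ 1 - v₁ 1) - ((v₃ 0 - v₁ 0) ^ 2 + (v₃ 1 - v₁ 1) ^ 2) * (v₂ 1 - v₁ 1))) * hd0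
      + (4 * (c 1 - v₁ 1) * ((v₂ 0 - v₁ 0) * (v₃ 1 - v₁ 1) - (v₂ 1 - v₁ 1) * (v₃ 0 - v₁ 0)) + 2 * (((v₃ 0 - v₁ 0) ^ 2 + (v₃ 1 - v₁ 1) ^ 2) * (v₂ 0 - v₁ 0) - ((v₂ 0 - v₁ 0) ^ 2 + (v₂ 1 - v₁ 1) ^ 2) * (v₃ 0 - v₁ 0))) * hd1
  -- rewrite side-length squares into common forms
  have e12 : ((v₁ 0 - v₂ 0) ^ 2 + (v₁ 1 - v₂ 1) ^ 2) = ((v₂ 0 - v₁ 0) ^ 2 + (v₂ 1 - v₁ 1) ^ 2) := by ring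
  have e13 : ((v₁ 0 - v₃ 0) ^ 2 + (v₁ 1 - v₃ 1) ^ 2) = ((v₃ 0 - v₁ 0) ^ 2 + (v₃ 1 - v₁ 1) ^ 2) := by ring
  have e23 : ((v₂ 0 - v₃ 0) ^ 2 + (v₂ 1 - v₃ 1) ^ 2) = ((v₃ 0 - v₂ 0) ^ 2 + (v₃ 1 - v₂ 1) ^ 2) := by ring
  have hb : R ^ 2 / 4 * (2 * ((v₂ 0 - v₁ 0) * (v₃ 1 - v₁ 1) - (v₂ 1 - v₁ 1) * (v₃ 0 - v₁ 0)) * ((v₁ 0 - v₂ 0) * (v₃ 0 - v₂ 0) + (v₁ 1 - v₂ 1) * (v₃ 1 - v₂ 1)) / (((v₁ 0 - v₂ 0) ^ 2 + (v₁ 1 - v₂ 1) ^ 2) * ((v₃ 0 - v₂ 0) ^ 2 + (v₃ 1 - v₂ 1) ^ 2))) = ((v₃ 0 - v₁ 0) ^ 2 + (v₃ 1 - v₁ 1) ^ 2) * ((v₁ 0 - v₂ 0) * (v₃ 0 - v₂ 0) + (v₁ 1 - v₂ 1) * (v₃ 1 - v₂ 1)) / (8 * ((v₂ 0 - v₁ 0)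 * (v₃ 1 - v₁ 1) - (v₂ 1 - v₁ 1) * (v₃ 0 - v₁ 0))) := by
    rw [hR2div, e12]
    exact frac_aux _ _ _ _ _ (ne_of_gt hT) (ne_of_gt hnu) (ne_of_gt hn32)
  have hg : R ^ 2 / 4 * (2 * ((v₂ 0 - v₁ 0) * (v₃ 1 - v₁ 1) - (v₂ 1 - v₁ 1) * (v₃ 0 - v₁ 0)) * ((v₂ 0 - v₃ 0) * (v₁ 0 - v₃ 0) + (v₂ 1 - v₃ 1) * (v₁ 1 - v₃ 1)) / (((v₂ 0 - v₃ 0) ^ 2 + (v₂ 1 - v₃ 1) ^ 2) * ((v₁ 0 - v₃ 0) ^ 2 + (v₁ 1 - v₃ 1) ^ 2))) = ((v₂ 0 - v₁ 0) ^ 2 + (v₂ 1 - v₁ 1) ^ 2) * ((v₂ 0 - v₃ 0) * (v₁ 0 - v₃ 0) + (v₂ 1 - v₃ 1) * (v₁ 1 - v₃ 1)) / (8 * ((v₂ 0 - v₁ 0) * (v₃ 1 - v₁ 1) - (v₂ 1 - v₁ 1) * (v₃ 0 - v₁ 0))) := by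
    rw [hR2div, e23, e13]
    exact frac_aux2 _ _ _ _ _ (ne_of_gt hT) (ne_of_gt hnw) (ne_of_gt hn32)
  rw [hs2β, hs2γ, mul_add (R ^ 2 / 4), hb, hg, ← add_div,
    eq_div_iff (by positivity)]
  simp only [det2, PiLp.sub_apply]
  linear_combination (2 * ((v₃ 1 - v₁ 1) - (v₂ 1 - v₁ 1))) * hd0 + (2 * ((v₂ 0 - v₁ 0) - (v₃ 0 - v₁ 0))) * hd1
end
end
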